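/- For every α ∈ L¹(X,ℝ), E^X_α(σ) → 1 as |σ| → ∞ with σ real. -/

import Mathlib

open MeasureTheory Filter

/-- The alternating exponent term κ(s₁,…,s_j). -/
noncomputable def kappaFn (x0 : ℝ) (j : ℕ) (s : Fin j → ℝ) : ℝ :=
  (∑ ν : Fin j, (-1 : ℝ) ^ (j - 1 - (ν : ℕ)) * s ν) - (if Odd j then x0 else 0)

/-- The ordered simplex {x₀ < s₁ < ⋯ < s_j < x₁}. -/
def simplexSet (x0 x1 : ℝ) (j : ℕ) : Set (Fin j → ℝ) :=
  {s | StrictMono s ∧ ∀ ν, s ν ∈ Set.Ioo x0 x1}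

/-- The j-th term C_j(σ) of the harmonic exponential series. -/
noncomputable def Cterm (x0 x1 : ℝ) (α : ℝ → ℝ) (j : ℕ) (σ : ℂ) : ℂ :=
  ∫ s in simplexSet x0 x1 j,
    Complex.exp (2 * Complex.I * σ * (kappaFn x0 j s : ℂ)) * ∏ ν : Fin j, (α (s ν) : ℂ)

/-- The harmonic exponential E^X_α(σ). -/
noncomputable def hexp (x0 x1 : ℝ) (α : ℝ → ℝ) (σ : ℂ) : ℂ :=
  1 + ∑' j : ℕ, Cterm x0 x1 α (j + 1) σ

/-- The L¹ norm of α on (x₀,x₁). -/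
noncomputable def L1normOn (x0 x1 : ℝ) (α : ℝ → ℝ) : ℝ :=
  ∫ x in Set.Ioo x0 x1, |α x|

/-- β_σ = 1 if Im σ ≥ 0, else e^{2|Im σ|(x₁−x₀)}. -/
noncomputable def betaSigma (x0 x1 : ℝ) (σ : ℂ) : ℝ :=
  if 0 ≤ σ.im then 1 else Real.exp (2 * |σ.im| * (x1 - x0))

lemma measurableSet_strictMonoComp {n : ℕ} (u : Fin n → Fin n) :
    MeasurableSet {s : Fin n → ℝ | StrictMono (s ∘ u)} := by
  have : {s : Fin n → ℝ | StrictMono (s ∘ u)}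
      = ⋂ (p : Fin n × Fin n) (_ : p.1 < p.2), {s : Fin n → ℝ | s (u p.1) < s (u p.2)} := by
    ext s
    simp only [Set.mem_iInter, Set.mem_setOf_eq]
    exact ⟨fun h p hp => h hp, fun h a b hab => h (a, b) hab⟩
  rw [this]
  exact MeasurableSet.iInter fun p => MeasurableSet.iInter fun _ =>
    measurableSet_lt (measurable_pi_apply _) (measurable_pi_apply _)

lemma measurableSet_strictMonoSet (n : ℕ) :
    MeasurableSet {s : Fin n → ℝ | StrictMono s} := by
  simpa [Function.comp] using measurableSet_strictMonoComp (n := n) id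

lemma measurableSet_simplexSet (x0 x1 : ℝ) (n : ℕ) :
    MeasurableSet (simplexSet x0 x1 n) := by
  have : simplexSet x0 x1 n
      = {s : Fin n → ℝ | StrictMono s} ∩ ⋂ ν, (fun s : Fin n → ℝ => s ν) ⁻¹' Set.Ioo x0 x1 := by
    ext s; simp [simplexSet, Set.mem_iInter]
  rw [this]
  exact (measurableSet_strictMonoSet n).inter <| MeasurableSet.iInter fun ν =>
    measurableSet_Ioo.preimage (measurable_pi_apply ν)

/-- key simplex bound -/
lemma simplex_setIntegral_le {q : ℝ → ℝ} (hq : Integrable q) (hq0 : ∀ x, 0 ≤ q x) (n : ℕ) :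
    ∫ s in {s : Fin n → ℝ | StrictMono s}, ∏ ν, q (s ν) ≤ (∫ x, q x) ^ n / n.factorial := by
  set P : (Fin n → ℝ) → ℝ := fun s => ∏ ν, q (s ν) with hP
  have hPint : Integrable P := Integrable.fintype_prod (𝕜 := ℝ) fun _ => hq
  have hP0 : ∀ s, 0 ≤ P s := fun s => Finset.prod_nonneg fun ν _ => hq0 _
  set S : Equiv.Perm (Fin n) → Set (Fin n → ℝ) := fun τ => {s | StrictMono (s ∘ τ)} with hS
  have hSmeas : ∀ τ, MeasurableSet (S τ) := fun τ => measurableSet_strictMonoComp _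
  -- each piece has the same integral as the strict mono set
  have hequal : ∀ τ : Equiv.Perm (Fin n),
      ∫ s in S τ, P s = ∫ s in {s : Fin n → ℝ | StrictMono s}, P s := by
    intro τ
    have hmp : MeasurePreserving ((MeasurableEquiv.piCongrLeft (fun _ : Fin n => ℝ) τ).symm)
        volume volume :=
      (volume_measurePreserving_piCongrLeft (fun _ : Fin n => ℝ) τ).symm _
    have hT : ∀ s : Fin n → ℝ,
        ((MeasurableEquiv.piCongrLeft (fun _ : Fin n => ℝ) τ).symm s) = s ∘ τ := by
      intro s; rfl
    have := hmp.setIntegral_preimage_emb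
      (MeasurableEquiv.measurableEmbedding _) P {s : Fin n → ℝ | StrictMono s}
    rw [← this]
    have hset : (⇑(MeasurableEquiv.piCongrLeft (fun _ : Fin n => ℝ) τ).symm) ⁻¹'
        {s : Fin n → ℝ | StrictMono s} = S τ := by
      ext s; simp only [Set.mem_preimage, Set.mem_setOf_eq, hT, hS]
    rw [hset]
    refine (setIntegral_congr_fun (hSmeas τ) fun x _ => ?_).symm
    rw [hT]
    simpa [hP] using (Equiv.prod_comp τ fun i => q (x i))
  -- disjointness
  have hdisj : (Set.univ : Set (Equiv.Perm (Fin n))).Pairwise (Function.onFun Disjoint S) := by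
    intro τ _ τ' _ hne
    rw [Function.onFun, Set.disjoint_left]
    intro s hs hs'
    apply hne
    have hπ : StrictMono fun i => τ'.symm (τ i) := by
      intro a b hab
      have h1 : (s ∘ τ) a < (s ∘ τ) b := hs hab
      have h2 : (s ∘ τ') (τ'.symm (τ a)) < (s ∘ τ') (τ'.symm (τ b)) := by
        simpa [Function.comp] using h1
      exact hs'.lt_iff_lt.mp h2
    have hid : (fun i => τ'.symm (τ i)) = id := by
      apply (hπ.range_inj strictMono_id).mp
      rw [Set.range_id]
      exact ((τ'.symm.surjective.comp τ.surjective).range_eq)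
    ext i
    have h3 := congrFun hid i
    simp only [id] at h3
    have := congrArg τ' h3
    exact congrArg Fin.val (by simpa using this)
  have hsum : ∑ τ : Equiv.Perm (Fin n), ∫ s in S τ, P s ≤ ∫ s, P s := by
    rw [← integral_biUnion_finset Finset.univ (fun τ _ => hSmeas τ)
      (by simpa using hdisj) (fun τ _ => hPint.integrableOn)]
    exact setIntegral_le_integral hPint (Filter.Eventually.of_forall hP0)
  have hcard : ∑ τ : Equiv.Perm (Fin n), ∫ s in S τ, P s
      = (n.factorial : ℝ) * ∫ s in {s : Fin n → ℝ | StrictMono s}, P s := by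
    rw [Finset.sum_congr rfl fun τ _ => hequal τ, Finset.sum_const, Finset.card_univ,
      Fintype.card_perm, nsmul_eq_mul, Fintype.card_fin]
  have hint : ∫ s, P s = (∫ x, q x) ^ n := by
    have := MeasureTheory.integral_fintype_prod_eq_pow (ι := Fin n) (μ := (volume : Measure ℝ)) q
    rw [Fintype.card_fin] at this
    exact this
  rw [le_div_iff₀ (by positivity : (0:ℝ) < (n.factorial : ℝ))]
  rw [hcard, hint] at hsum
  linarith


lemma norm_Cterm_le (x0 x1 : ℝ) (α : ℝ → ℝ) (hα : IntegrableOn α (Set.Ioo x0 x1))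
    (n : ℕ) (σ : ℝ) :
    ‖Cterm x0 x1 α n (σ : ℂ)‖ ≤ (∫ x in Set.Ioo x0 x1, |α x|) ^ n / n.factorial := by
  set q : ℝ → ℝ := (Set.Ioo x0 x1).indicator fun x => ‖α x‖ with hqdef
  have hq : Integrable q := IntegrableOn.integrable_indicator hα.norm measurableSet_Ioo
  have hq0 : ∀ x, 0 ≤ q x := fun x => Set.indicator_nonneg (fun y _ => norm_nonneg _) x
  have hL : ∫ x, q x = ∫ x in Set.Ioo x0 x1, |α x| := by
    rw [hqdef, integral_indicator measurableSet_Ioo]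
    simp [Real.norm_eq_abs]
  have hPint : Integrable fun s : Fin n → ℝ => ∏ ν, q (s ν) :=
    Integrable.fintype_prod (𝕜 := ℝ) fun _ => hq
  have step1 : ‖Cterm x0 x1 α n (σ : ℂ)‖ ≤ ∫ s in simplexSet x0 x1 n,
      ‖Complex.exp (2 * Complex.I * (σ:ℂ) * (kappaFn x0 n s : ℂ))
        * ∏ ν : Fin n, (α (s ν) : ℂ)‖ := norm_integral_le_integral_norm _
  have step2 : ∫ s in simplexSet x0 x1 n,
      ‖Complex.exp (2 * Complex.I * (σ:ℂ) * (kappaFn x0 n s : ℂ))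
        * ∏ ν : Fin n, (α (s ν) : ℂ)‖ = ∫ s in simplexSet x0 x1 n, ∏ ν, q (s ν) := by
    refine setIntegral_congr_fun (measurableSet_simplexSet x0 x1 n) fun s hs => ?_
    have hexp : (2 * Complex.I * (σ:ℂ) * (kappaFn x0 n s : ℂ))
        = ((2 * σ * kappaFn x0 n s : ℝ) : ℂ) * Complex.I := by push_cast; ring
    rw [norm_mul, hexp, Complex.norm_exp_ofReal_mul_I, one_mul, norm_prod]
    refine Finset.prod_congr rfl fun ν _ => ?_
    rw [Complex.norm_real, hqdef, Set.indicator_of_mem (hs.2 ν)]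
  have step3 : ∫ s in simplexSet x0 x1 n, ∏ ν, q (s ν)
      ≤ ∫ s in {s : Fin n → ℝ | StrictMono s}, ∏ ν, q (s ν) := by
    refine setIntegral_mono_set hPint.integrableOn
      (Filter.Eventually.of_forall fun s => Finset.prod_nonneg fun ν _ => hq0 _)
      (Filter.Eventually.of_forall fun s hs => hs.1)
  calc ‖Cterm x0 x1 α n (σ : ℂ)‖ ≤ _ := step1
    _ = _ := step2
    _ ≤ _ := step3
    _ ≤ (∫ x, q x) ^ n / n.factorial := simplex_setIntegral_le hq hq0 n
    _ = _ := by rw [hL]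

open scoped FourierTransform RealInnerProductSpace in
lemma Cterm_tendsto (x0 x1 : ℝ) (α : ℝ → ℝ) (n : ℕ) (hn : 0 < n) :
    Tendsto (fun σ : ℝ => Cterm x0 x1 α n ((σ : ℂ))) (cocompact ℝ) (nhds 0) := by
  classical
  set cR : Fin n → ℝ := fun ν => (-1 : ℝ) ^ (n - 1 - (ν : ℕ)) with hcR
  set d : ℝ := if Odd n then x0 else 0 with hd
  set g : (Fin n → ℝ) → ℂ :=
    (simplexSet x0 x1 n).indicator (fun s => ∏ ν : Fin n, (α (s ν) : ℂ)) with hgdef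
  set c : EuclideanSpace ℝ (Fin n) := (WithLp.equiv 2 (Fin n → ℝ)).symm cR with hc
  set e := (MeasurableEquiv.toLp 2 (Fin n → ℝ)).symm with he
  set w : ℝ → EuclideanSpace ℝ (Fin n) := fun σ => (-(σ / Real.pi)) • c with hwdef
  set gE : EuclideanSpace ℝ (Fin n) → ℂ := fun v => g (e v) with hgE
  -- norm of c is positive
  have hcnorm : 0 < ‖c‖ := by
    rw [norm_pos_iff]
    intro h0
    have h1 : cR ⟨0, hn⟩ = 0 := by
      have := congrFun (congrArg (WithLp.equiv 2 (Fin n → ℝ)) h0) ⟨0, hn⟩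
      simpa [hc] using this
    exact pow_ne_zero _ (by norm_num : (-1:ℝ) ≠ 0) h1
  -- w tends to cocompact
  have hw : Tendsto w (cocompact ℝ) (cocompact (EuclideanSpace ℝ (Fin n))) := by
    rw [hasBasis_cocompact.tendsto_right_iff]
    intro K hK
    obtain ⟨r, hr⟩ := hK.isBounded.subset_closedBall 0
    have hnorm : ∀ σ : ℝ, ‖w σ‖ = (‖c‖ / Real.pi) * |σ| := by
      intro σ
      rw [hwdef, norm_smul, Real.norm_eq_abs, abs_neg, abs_div,
        abs_of_pos Real.pi_pos]
      ring
    have h1 : Tendsto (fun σ : ℝ => ‖w σ‖) (cocompact ℝ) atTop := by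
      simp_rw [hnorm]
      exact (tendsto_norm_cocompact_atTop (E := ℝ)).const_mul_atTop
        (div_pos hcnorm Real.pi_pos)
    filter_upwards [h1.eventually (eventually_gt_atTop r)] with σ hσ
    intro hmem
    have := hr hmem
    rw [Metric.mem_closedBall, dist_zero_right] at this
    exact absurd this (not_le.mpr hσ)
  have hRL := (tendsto_integral_exp_inner_smul_cocompact (f := gE)).comp hw
  -- identify the two integrals
  have key : ∀ σ : ℝ, ‖Cterm x0 x1 α n ((σ : ℂ))‖ = ‖∫ v, 𝐞 (-⟪v, w σ⟫) • gE v‖ := by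
    intro σ
    have hinner : ∀ s : Fin n → ℝ, ⟪e.symm s, w σ⟫ = -(σ / Real.pi) * ∑ ν, cR ν * s ν := by
      intro s
      simp only [PiLp.inner_apply, RCLike.inner_apply, conj_trivial, hwdef, hc,
        PiLp.smul_apply, smul_eq_mul, he, MeasurableEquiv.symm_symm, MeasurableEquiv.coe_toLp,
        MeasurableEquiv.symm_mk, MeasurableEquiv.coe_mk,
        WithLp.equiv_symm_apply, PiLp.toLp_apply, Finset.mul_sum]
      exact Finset.sum_congr rfl fun ν _ => by ring
    have transport : ∫ v, 𝐞 (-⟪v, w σ⟫) • gE v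
        = ∫ s : Fin n → ℝ, 𝐞 (-⟪e.symm s, w σ⟫) • g s := by
      rw [← ((EuclideanSpace.volume_preserving_symm_measurableEquiv_toLp (Fin n)).symm).integral_comp'
        (fun v => 𝐞 (-⟪v, w σ⟫) • gE v)]
      refine integral_congr_ae (Filter.Eventually.of_forall fun s => ?_)
      simp only [hgE, he, MeasurableEquiv.apply_symm_apply]
    have pointwise : ∀ s : Fin n → ℝ, 𝐞 (-⟪e.symm s, w σ⟫) • g s
        = Complex.exp (((2 * σ * ∑ ν, cR ν * s ν : ℝ) : ℂ) * Complex.I) * g s := by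
      intro s
      have harg : 2 * Real.pi * (-(-(σ / Real.pi) * ∑ ν, cR ν * s ν))
          = 2 * σ * ∑ ν, cR ν * s ν := by
        field_simp
      rw [Circle.smul_def, Real.fourierChar_apply, smul_eq_mul, hinner s, harg]
    -- now compute Cterm
    have hkappa : ∀ s : Fin n → ℝ, kappaFn x0 n s = (∑ ν, cR ν * s ν) - d := fun s => rfl
    have hCterm : Cterm x0 x1 α n ((σ : ℂ))
        = Complex.exp (((-(2 * σ * d) : ℝ) : ℂ) * Complex.I)
          * ∫ s : Fin n → ℝ, 𝐞 (-⟪e.symm s, w σ⟫) • g s := by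
      have expand : ∀ s : Fin n → ℝ,
          Complex.exp (2 * Complex.I * (σ : ℂ) * ((kappaFn x0 n s : ℝ) : ℂ))
            * ∏ ν : Fin n, (α (s ν) : ℂ)
          = Complex.exp (((-(2 * σ * d) : ℝ) : ℂ) * Complex.I)
            * (Complex.exp (((2 * σ * ∑ ν, cR ν * s ν : ℝ) : ℂ) * Complex.I)
              * ∏ ν : Fin n, (α (s ν) : ℂ)) := by
        intro s
        rw [← mul_assoc, ← Complex.exp_add]
        congr 2
        rw [hkappa s]
        push_cast
        ring
      rw [Cterm]
      simp_rw [expand]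
      rw [MeasureTheory.integral_const_mul]
      congr 1
      rw [← integral_indicator (measurableSet_simplexSet x0 x1 n)]
      refine integral_congr_ae (Filter.Eventually.of_forall fun s => ?_)
      show _ = 𝐞 (-⟪e.symm s, w σ⟫) • g s
      rw [pointwise s, hgdef, Set.indicator_mul_right]
    rw [hCterm, transport, norm_mul,
      Complex.norm_exp_ofReal_mul_I, one_mul]
  rw [tendsto_zero_iff_norm_tendsto_zero]
  have := tendsto_zero_iff_norm_tendsto_zero.mp hRL
  refine this.congr fun σ => (key σ).symm

theorem hexp_tendsto_one (x0 x1 : ℝ) (hx : x0 < x1) (α : ℝ → ℝ)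
    (hα : IntegrableOn α (Set.Ioo x0 x1)) :
    Tendsto (fun σ : ℝ => hexp x0 x1 α (σ : ℂ)) (cocompact ℝ) (nhds 1) := by
  set L : ℝ := ∫ x in Set.Ioo x0 x1, |α x| with hLdef
  have hb : Summable (fun j : ℕ => L ^ (j + 1) / (j + 1).factorial) :=
    (summable_nat_add_iff 1).mpr (Real.summable_pow_div_factorial L)
  have hterm : ∀ j : ℕ,
      Tendsto (fun σ : ℝ => Cterm x0 x1 α (j + 1) ((σ : ℂ))) (cocompact ℝ) (nhds 0) :=
    fun j => Cterm_tendsto x0 x1 α (j + 1) j.succ_pos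
  have hbound : ∀ᶠ σ : ℝ in cocompact ℝ, ∀ j : ℕ,
      ‖Cterm x0 x1 α (j + 1) ((σ : ℂ))‖ ≤ L ^ (j + 1) / (j + 1).factorial :=
    Filter.Eventually.of_forall fun σ j => norm_Cterm_le x0 x1 α hα (j + 1) σ
  have h := tendsto_tsum_of_dominated_convergence hb hterm hbound
  rw [tsum_zero] at h
  have h2 := (tendsto_const_nhds (x := (1 : ℂ)) (f := cocompact ℝ)).add h
  rw [add_zero] at h2
  simpa [hexp] using h2
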